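/- For noncrossing partitions p ∈ NC(k,l), r ∈ NC(l,m), s ∈ NC(m,v), the number of cycles arising in vertical composition satisfies cy(p, s∘r) = cy(p,r) + cy(r∘p, s) - cy(r,s). -/

import Mathlib

open scoped Classical

/-- The `k` upper and `l` lower points of a partition diagram. -/
abbrev Pt (k l : ℕ) := Sum (Fin k) (Fin l)

/-- Position of a point on the boundary circle: upper points left to right,
then lower points right to left. -/
def ptIdx {k l : ℕ} : Pt k l → ℕ :=
  Sum.elim (fun i => (i : ℕ)) (fun j => k + (l - 1 - (j : ℕ)))

/-- A partition of the `k + l` points (a setoid) is noncrossing if whenever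
`a < b < x < y` in the circular order, `a ∼ x` and `b ∼ y` imply `a ∼ b`. -/
def Noncrossing {k l : ℕ} (p : Setoid (Pt k l)) : Prop :=
  ∀ a b x y : Pt k l, ptIdx a < ptIdx b → ptIdx b < ptIdx x → ptIdx x < ptIdx y →
    p.r a x → p.r b y → p.r a b

/-- `b(p)`: number of blocks of a partition. -/
noncomputable def blocks {α : Type*} (p : Setoid α) : ℕ := Nat.card (Quotient p)

/-- The three rows of points appearing in a vertical composition. -/
abbrev X3 (k l w : ℕ) := Sum (Fin k) (Sum (Fin l) (Fin w))

def upEmb {k l w : ℕ} : Pt k l → X3 k l w := Sum.map id Sum.inl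
def loEmb {k l w : ℕ} : Pt l w → X3 k l w := Sum.inr
def outEmb {k l w : ℕ} : Pt k w → X3 k l w := Sum.map id Sum.inr

/-- The partition of the three rows generated by `p` on the two upper rows and
`q` on the two lower rows. -/
def jointSetoid {k l w : ℕ} (p : Setoid (Pt k l)) (q : Setoid (Pt l w)) :
    Setoid (X3 k l w) :=
  Relation.EqvGen.setoid (fun x y =>
    (∃ a b, p.r a b ∧ x = upEmb a ∧ y = upEmb b) ∨
    (∃ a b, q.r a b ∧ x = loEmb a ∧ y = loEmb b))

/-- Vertical composition `q ∘ p ∈ NC(k,w)` of `p ∈ NC(k,l)` and `q ∈ NC(l,w)`. -/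
def compPart {k l w : ℕ} (p : Setoid (Pt k l)) (q : Setoid (Pt l w)) : Setoid (Pt k w) :=
  Setoid.comap outEmb (jointSetoid p q)

/-- `cb(p,q)`: the number of central blocks removed in the composition, i.e. blocks of
the joint partition consisting only of middle points. -/
noncomputable def cb {k l w : ℕ} (p : Setoid (Pt k l)) (q : Setoid (Pt l w)) : ℕ :=
  Nat.card {cls : Quotient (jointSetoid p q) //
    ∀ x : X3 k l w, Quotient.mk (jointSetoid p q) x = cls → ∃ j : Fin l, x = Sum.inr (Sum.inl j)}

/-- `cy(p,q) = l + b(qp) + cb(p,q) - b(p) - b(q)`: the number of cycles removed. -/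
noncomputable def cy {k l w : ℕ} (p : Setoid (Pt k l)) (q : Setoid (Pt l w)) : ℤ :=
  (l : ℤ) + blocks (compPart p q) + cb p q - blocks p - blocks q

-- ===== auxiliary =====

private lemma card_split' {β : Type*} [Finite β] (P : β → Prop) :
    Nat.card β = Nat.card {x // P x} + Nat.card {x // ¬ P x} :=
  (Nat.card_congr (Equiv.sumCompl P).symm).trans Nat.card_sum

private lemma card_outer {δ α : Type*} [Finite δ] [Finite α] (J : Setoid δ) (B : Setoid α)
    (i : α → δ) (M : δ → Prop)
    (hrange : ∀ d, ¬ M d ↔ ∃ x, i x = d)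
    (hB : ∀ x y, B.r x y ↔ J.r (i x) (i y)) :
    Nat.card (Quotient B) =
      Nat.card {cls : Quotient J // ¬ ∀ d, Quotient.mk J d = cls → M d} := by
  apply Nat.card_congr
  apply Equiv.ofBijective (f := Quotient.lift
    (fun x => (⟨Quotient.mk J (i x),
      fun h => ((hrange (i x)).mpr ⟨x, rfl⟩) (h (i x) rfl)⟩ :
        {cls : Quotient J // ¬ ∀ d, Quotient.mk J d = cls → M d}))
    (fun x y hxy => Subtype.ext (Quotient.sound ((hB x y).mp hxy))))
  constructor
  · intro a b
    induction a using Quotient.ind with | _ x => ?_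
    induction b using Quotient.ind with | _ y => ?_
    intro h
    exact Quotient.sound ((hB _ _).mpr (Quotient.exact (congrArg Subtype.val h)))
  · rintro ⟨cls, hcls⟩
    push_neg at hcls
    obtain ⟨d, hd, hM⟩ := hcls
    obtain ⟨x, rfl⟩ := (hrange d).mp hM
    exact ⟨Quotient.mk B x, Subtype.ext hd⟩

private lemma card_pure {δ γ : Type*} [Finite δ] [Finite γ] (J : Setoid δ) (C : Setoid γ)
    (j : γ → δ) (M : δ → Prop) (Mγ : γ → Prop)
    (hCJ : ∀ g g', C.r g g' → J.r (j g) (j g'))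
    (hMj : ∀ g, M (j g) → Mγ g)
    (hMsurj : ∀ d, M d → ∃ g, j g = d)
    (hpure1 : ∀ g g', (∀ d, J.r (j g) d → M d) → J.r (j g) (j g') → C.r g g')
    (hpure2 : ∀ g, (∀ y, C.r g y → Mγ y) → ∀ d, J.r (j g) d → M d) :
    Nat.card {c : Quotient C // ∀ g, Quotient.mk C g = c → Mγ g}
      = Nat.card {cls : Quotient J // ∀ d, Quotient.mk J d = cls → M d} := by
  apply Nat.card_congr
  have wd : ∀ (g g' : γ), C.r g g' → Quotient.mk J (j g) = Quotient.mk J (j g') :=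
    fun g g' h => Quotient.sound (hCJ g g' h)
  have memb : ∀ (c : Quotient C), (∀ g, Quotient.mk C g = c → Mγ g) →
      ∀ d, Quotient.mk J d = Quotient.lift (fun g => Quotient.mk J (j g)) wd c → M d := by
    intro c
    induction c using Quotient.ind with | _ g => ?_
    intro hc d hd
    exact hpure2 g (fun y hy => hc y (Quotient.sound (C.iseqv.symm hy)))
      d (J.iseqv.symm (Quotient.exact hd))
  refine Equiv.ofBijective
    (fun z => ⟨Quotient.lift (fun g => Quotient.mk J (j g)) wd z.1, memb z.1 z.2⟩) ⟨?_, ?_⟩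
  · have key : ∀ c c', (∀ g, Quotient.mk C g = c → Mγ g) →
        Quotient.lift (fun g => Quotient.mk J (j g)) wd c
          = Quotient.lift (fun g => Quotient.mk J (j g)) wd c' → c = c' := by
      intro c c'
      induction c using Quotient.ind with | _ g => ?_
      induction c' using Quotient.ind with | _ g' => ?_
      intro hc h
      refine Quotient.sound (hpure1 g g' ?_ (Quotient.exact h))
      intro d hd
      exact hpure2 g (fun y hy => hc y (Quotient.sound (C.iseqv.symm hy))) d hd
    rintro ⟨c, hc⟩ ⟨c', hc'⟩ h
    exact Subtype.ext (key c c' hc (congrArg Subtype.val h))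
  · rintro ⟨cls, hcls⟩
    obtain ⟨d, rfl⟩ := Quotient.exists_rep cls
    obtain ⟨g, rfl⟩ := hMsurj d (hcls d rfl)
    refine ⟨⟨Quotient.mk C g, ?_⟩, Subtype.ext rfl⟩
    intro g' hg'
    exact hMj g' (hcls (j g') (Quotient.sound (hCJ g' g (Quotient.exact hg'))))

private lemma middle_range {a b c : ℕ} (d : X3 a b c) :
    ¬ (∃ j : Fin b, d = Sum.inr (Sum.inl j)) ↔ ∃ x : Pt a c, outEmb x = d := by
  rcases d with i | j | t
  · exact ⟨fun _ => ⟨Sum.inl i, rfl⟩, fun _ => by rintro ⟨j, hj⟩; simp at hj⟩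
  · constructor
    · intro h; exact (h ⟨j, rfl⟩).elim
    · rintro ⟨(i' | t'), hx⟩ <;> simp [outEmb] at hx
  · exact ⟨fun _ => ⟨Sum.inr t, rfl⟩, fun _ => by rintro ⟨j, hj⟩; simp at hj⟩

private lemma blocks_joint {a b c : ℕ} (q1 : Setoid (Pt a b)) (q2 : Setoid (Pt b c)) :
    blocks (jointSetoid q1 q2) = blocks (compPart q1 q2) + cb q1 q2 := by
  have h3 := card_split' (β := Quotient (jointSetoid q1 q2))
    (fun cls => ∀ x : X3 a b c, Quotient.mk (jointSetoid q1 q2) x = cls →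
      ∃ j : Fin b, x = Sum.inr (Sum.inl j))
  have h1 := card_outer (jointSetoid q1 q2) (compPart q1 q2) outEmb
    (fun d => ∃ j : Fin b, d = Sum.inr (Sum.inl j)) middle_range (fun _ _ => Iff.rfl)
  unfold blocks cb
  rw [h1, h3]
  exact Nat.add_comm _ _
-- ===== the 4-row joint partition =====

abbrev X4 (k l m v : ℕ) := Sum (Fin k) (Sum (Fin l) (Sum (Fin m) (Fin v)))

def e1 {k l m v : ℕ} : Pt k l → X4 k l m v :=
  Sum.elim Sum.inl (fun j => Sum.inr (Sum.inl j))
def e2 {k l m v : ℕ} : Pt l m → X4 k l m v :=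
  Sum.elim (fun j => Sum.inr (Sum.inl j)) (fun c => Sum.inr (Sum.inr (Sum.inl c)))
def e3 {k l m v : ℕ} : Pt m v → X4 k l m v :=
  Sum.elim (fun c => Sum.inr (Sum.inr (Sum.inl c))) (fun t => Sum.inr (Sum.inr (Sum.inr t)))

def eklv {k l m v : ℕ} : X3 k l v → X4 k l m v :=
  Sum.elim Sum.inl (Sum.elim (fun j => Sum.inr (Sum.inl j))
    (fun t => Sum.inr (Sum.inr (Sum.inr t))))
def elmv {k l m v : ℕ} : X3 l m v → X4 k l m v :=
  Sum.elim (fun j => Sum.inr (Sum.inl j)) (Sum.elim (fun c => Sum.inr (Sum.inr (Sum.inl c)))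
    (fun t => Sum.inr (Sum.inr (Sum.inr t))))
def ekmv {k l m v : ℕ} : X3 k m v → X4 k l m v :=
  Sum.elim Sum.inl (Sum.elim (fun c => Sum.inr (Sum.inr (Sum.inl c)))
    (fun t => Sum.inr (Sum.inr (Sum.inr t))))
def eklm {k l m v : ℕ} : X3 k l m → X4 k l m v :=
  Sum.elim Sum.inl (Sum.elim (fun j => Sum.inr (Sum.inl j))
    (fun c => Sum.inr (Sum.inr (Sum.inl c))))

def rel4 {k l m v : ℕ} (p : Setoid (Pt k l)) (r : Setoid (Pt l m)) (s : Setoid (Pt m v)) :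
    X4 k l m v → X4 k l m v → Prop := fun x y =>
  (∃ a b, p.r a b ∧ x = e1 a ∧ y = e1 b) ∨
  (∃ a b, r.r a b ∧ x = e2 a ∧ y = e2 b) ∨
  (∃ a b, s.r a b ∧ x = e3 a ∧ y = e3 b)

def J4 {k l m v : ℕ} (p : Setoid (Pt k l)) (r : Setoid (Pt l m)) (s : Setoid (Pt m v)) :
    Setoid (X4 k l m v) := Relation.EqvGen.setoid (rel4 p r s)

variable {k l m v : ℕ} (p : Setoid (Pt k l)) (r : Setoid (Pt l m)) (s : Setoid (Pt m v))

private lemma lmv_mono {u w : X3 l m v} (h : (jointSetoid r s).r u w) :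
    (J4 p r s).r (elmv u) (elmv w) := by
  have h' : Relation.EqvGen _ u w := h
  clear h
  induction h' with
  | rel x y hxy =>
    refine Relation.EqvGen.rel _ _ ?_
    rcases hxy with ⟨a, b, hab, rfl, rfl⟩ | ⟨a, b, hab, rfl, rfl⟩
    · exact Or.inr (Or.inl ⟨a, b, hab, by cases a <;> rfl, by cases b <;> rfl⟩)
    · exact Or.inr (Or.inr ⟨a, b, hab, by cases a <;> rfl, by cases b <;> rfl⟩)
  | refl x => exact Relation.EqvGen.refl _
  | symm x y _ ih => exact Relation.EqvGen.symm _ _ ih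
  | trans x y z _ _ ih1 ih2 => exact Relation.EqvGen.trans _ _ _ ih1 ih2

private lemma klm_mono {u w : X3 k l m} (h : (jointSetoid p r).r u w) :
    (J4 p r s).r (eklm u) (eklm w) := by
  have h' : Relation.EqvGen _ u w := h
  clear h
  induction h' with
  | rel x y hxy =>
    refine Relation.EqvGen.rel _ _ ?_
    rcases hxy with ⟨a, b, hab, rfl, rfl⟩ | ⟨a, b, hab, rfl, rfl⟩
    · exact Or.inl ⟨a, b, hab, by cases a <;> rfl, by cases b <;> rfl⟩
    · exact Or.inr (Or.inl ⟨a, b, hab, by cases a <;> rfl, by cases b <;> rfl⟩)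
  | refl x => exact Relation.EqvGen.refl _
  | symm x y _ ih => exact Relation.EqvGen.symm _ _ ih
  | trans x y z _ _ ih1 ih2 => exact Relation.EqvGen.trans _ _ _ ih1 ih2

-- ===== instance 1 : rows k,l,v vs pure middle row m =====

private noncomputable def fA : X4 k l m v →
    Quotient (jointSetoid p (compPart r s)) ⊕ Quotient (jointSetoid r s)
  | Sum.inl i => Sum.inl (Quotient.mk _ (Sum.inl i))
  | Sum.inr (Sum.inl j) => Sum.inl (Quotient.mk _ (Sum.inr (Sum.inl j)))
  | Sum.inr (Sum.inr (Sum.inr t)) => Sum.inl (Quotient.mk _ (Sum.inr (Sum.inr t)))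
  | Sum.inr (Sum.inr (Sum.inl c)) =>
    if h : ∃ u : Pt l v, (jointSetoid r s).r (outEmb u) (Sum.inr (Sum.inl c)) then
      Sum.inl (Quotient.mk _ (loEmb h.choose))
    else Sum.inr (Quotient.mk _ (Sum.inr (Sum.inl c)))

private lemma fA_k (i : Fin k) : fA p r s (Sum.inl i) =
    Sum.inl (Quotient.mk (jointSetoid p (compPart r s)) (Sum.inl i)) := rfl
private lemma fA_l (j : Fin l) : fA p r s (Sum.inr (Sum.inl j)) =
    Sum.inl (Quotient.mk (jointSetoid p (compPart r s)) (Sum.inr (Sum.inl j))) := rfl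
private lemma fA_v (t : Fin v) : fA p r s (Sum.inr (Sum.inr (Sum.inr t))) =
    Sum.inl (Quotient.mk (jointSetoid p (compPart r s)) (Sum.inr (Sum.inr t))) := rfl
private lemma fA_m_eq (c : Fin m) : fA p r s (Sum.inr (Sum.inr (Sum.inl c))) =
    if h : ∃ u : Pt l v, (jointSetoid r s).r (outEmb u) (Sum.inr (Sum.inl c)) then
      Sum.inl (Quotient.mk (jointSetoid p (compPart r s)) (loEmb h.choose))
    else Sum.inr (Quotient.mk (jointSetoid r s) (Sum.inr (Sum.inl c))) := rfl

private lemma srB (u u' : Pt l v)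
    (h : (jointSetoid r s).r (outEmb u) (outEmb u')) :
    (jointSetoid p (compPart r s)).r (loEmb u) (loEmb u') :=
  Relation.EqvGen.rel _ _ (Or.inr ⟨u, u', h, rfl, rfl⟩)

private lemma fA_m (c : Fin m) (u : Pt l v)
    (h : (jointSetoid r s).r (outEmb u) (Sum.inr (Sum.inl c))) :
    fA p r s (Sum.inr (Sum.inr (Sum.inl c))) =
      Sum.inl (Quotient.mk (jointSetoid p (compPart r s)) (loEmb u)) := by
  have hex : ∃ u' : Pt l v, (jointSetoid r s).r (outEmb u') (Sum.inr (Sum.inl c)) := ⟨u, h⟩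
  rw [fA_m_eq, dif_pos hex]
  exact congrArg Sum.inl (Quotient.sound (srB p r s _ _
    ((jointSetoid r s).iseqv.trans hex.choose_spec ((jointSetoid r s).iseqv.symm h))))

private lemma fA_mm (c c' : Fin m)
    (h : (jointSetoid r s).r (Sum.inr (Sum.inl c)) (Sum.inr (Sum.inl c'))) :
    fA p r s (Sum.inr (Sum.inr (Sum.inl c))) = fA p r s (Sum.inr (Sum.inr (Sum.inl c'))) := by
  by_cases hex : ∃ u : Pt l v, (jointSetoid r s).r (outEmb u) (Sum.inr (Sum.inl c))
  · obtain ⟨u, hu⟩ := hex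
    rw [fA_m p r s c u hu, fA_m p r s c' u ((jointSetoid r s).iseqv.trans hu h)]
  · have hex' : ¬ ∃ u : Pt l v, (jointSetoid r s).r (outEmb u) (Sum.inr (Sum.inl c')) := by
      rintro ⟨u, hu⟩
      exact hex ⟨u, (jointSetoid r s).iseqv.trans hu ((jointSetoid r s).iseqv.symm h)⟩
    rw [fA_m_eq, fA_m_eq, dif_neg hex, dif_neg hex']
    exact congrArg Sum.inr (Quotient.sound h)

private lemma fA_edge (x y : X4 k l m v) (hxy : rel4 p r s x y) :
    fA p r s x = fA p r s y := by
  rcases hxy with ⟨a, b, hab, rfl, rfl⟩ | ⟨a, b, hab, rfl, rfl⟩ | ⟨a, b, hab, rfl, rfl⟩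
  · have hB : (jointSetoid p (compPart r s)).r (upEmb a) (upEmb b) :=
      Relation.EqvGen.rel _ _ (Or.inl ⟨a, b, hab, rfl, rfl⟩)
    have e : ∀ a : Pt k l, fA p r s (e1 a) =
        Sum.inl (Quotient.mk (jointSetoid p (compPart r s)) (upEmb a)) := by
      rintro (i | j) <;> rfl
    rw [e a, e b]
    exact congrArg Sum.inl (Quotient.sound hB)
  · have hC : (jointSetoid r s).r (upEmb a) (upEmb b) :=
      Relation.EqvGen.rel _ _ (Or.inl ⟨a, b, hab, rfl, rfl⟩)
    rcases a with j | c <;> rcases b with j' | c'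
    · exact congrArg Sum.inl (Quotient.sound (srB p r s (Sum.inl j) (Sum.inl j') hC))
    · exact (fA_m p r s c' (Sum.inl j) hC).symm
    · exact fA_m p r s c (Sum.inl j') ((jointSetoid r s).iseqv.symm hC)
    · exact fA_mm p r s c c' hC
  · have hC : (jointSetoid r s).r (loEmb a) (loEmb b) :=
      Relation.EqvGen.rel _ _ (Or.inr ⟨a, b, hab, rfl, rfl⟩)
    rcases a with c | t <;> rcases b with c' | t'
    · exact fA_mm p r s c c' hC
    · exact (fA_m p r s c (Sum.inr t') ((jointSetoid r s).iseqv.symm hC)).symm.symm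
    · exact (fA_m p r s c' (Sum.inr t) hC).symm
    · exact congrArg Sum.inl (Quotient.sound (srB p r s (Sum.inr t) (Sum.inr t') hC))

private lemma fA_inv {x y : X4 k l m v} (h : (J4 p r s).r x y) : fA p r s x = fA p r s y := by
  have h' : Relation.EqvGen (rel4 p r s) x y := h
  clear h
  induction h' with
  | rel a b hab => exact fA_edge p r s a b hab
  | refl => rfl
  | symm _ _ _ ih => exact ih.symm
  | trans _ _ _ _ _ ih1 ih2 => exact ih1.trans ih2

private lemma B1_iff (x y : X3 k l v) :
    (jointSetoid p (compPart r s)).r x y ↔ (J4 p r s).r (eklv x) (eklv y) := by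
  constructor
  · intro h
    have h' : Relation.EqvGen _ x y := h
    clear h
    induction h' with
    | rel a b hab =>
      rcases hab with ⟨a, b, hab, rfl, rfl⟩ | ⟨a, b, hab, rfl, rfl⟩
      · exact Relation.EqvGen.rel _ _
          (Or.inl ⟨a, b, hab, by cases a <;> rfl, by cases b <;> rfl⟩)
      · have h2 : (jointSetoid r s).r (outEmb a) (outEmb b) := hab
        have h3 := lmv_mono p r s h2
        have ea : elmv (outEmb a) = (eklv (loEmb a) : X4 k l m v) := by cases a <;> rfl
        have eb : elmv (outEmb b) = (eklv (loEmb b) : X4 k l m v) := by cases b <;> rfl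
        rw [ea, eb] at h3
        exact h3
    | refl a => exact Relation.EqvGen.refl _
    | symm _ _ _ ih => exact Relation.EqvGen.symm _ _ ih
    | trans _ _ _ _ _ ih1 ih2 => exact Relation.EqvGen.trans _ _ _ ih1 ih2
  · intro h
    have hf := fA_inv p r s h
    have e : ∀ z : X3 k l v, fA p r s (eklv z) =
        Sum.inl (Quotient.mk (jointSetoid p (compPart r s)) z) := by
      rintro (i | j | t) <;> rfl
    rw [e x, e y] at hf
    exact Quotient.exact (Sum.inl.inj hf)

private lemma range1 (d : X4 k l m v) :
    ¬ (∃ c : Fin m, d = Sum.inr (Sum.inr (Sum.inl c))) ↔ ∃ x : X3 k l v, eklv x = d := by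
  rcases d with i | j | c | t
  · exact ⟨fun _ => ⟨Sum.inl i, rfl⟩, fun _ => by rintro ⟨c, hc⟩; simp at hc⟩
  · exact ⟨fun _ => ⟨Sum.inr (Sum.inl j), rfl⟩, fun _ => by rintro ⟨c, hc⟩; simp at hc⟩
  · constructor
    · intro h; exact absurd ⟨c, rfl⟩ h
    · rintro ⟨(i' | j' | t'), hx⟩ <;> simp [eklv] at hx
  · exact ⟨fun _ => ⟨Sum.inr (Sum.inr t), rfl⟩, fun _ => by rintro ⟨c, hc⟩; simp at hc⟩

private lemma pure1_1 (g g' : X3 l m v)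
    (hpu : ∀ d, (J4 p r s).r (elmv g) d → ∃ c : Fin m, d = Sum.inr (Sum.inr (Sum.inl c)))
    (h : (J4 p r s).r (elmv g) (elmv g')) : (jointSetoid r s).r g g' := by
  obtain ⟨c, hc⟩ := hpu (elmv g) ((J4 p r s).iseqv.refl _)
  obtain ⟨c', hc'⟩ := hpu (elmv g') h
  have hg : g = Sum.inr (Sum.inl c) := by
    rcases g with j | c0 | t
    · simp [elmv] at hc
    · simp only [elmv, Sum.elim_inl, Sum.elim_inr] at hc
      simp only [Sum.inr.injEq, Sum.inl.injEq] at hc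
      rw [hc]
    · simp [elmv] at hc
  have hg' : g' = Sum.inr (Sum.inl c') := by
    rcases g' with j | c0 | t
    · simp [elmv] at hc'
    · simp only [elmv, Sum.elim_inl, Sum.elim_inr] at hc'
      simp only [Sum.inr.injEq, Sum.inl.injEq] at hc'
      rw [hc']
    · simp [elmv] at hc'
  subst hg; subst hg'
  have hcond : ¬ ∃ u : Pt l v, (jointSetoid r s).r (outEmb u) (Sum.inr (Sum.inl c)) := by
    rintro ⟨u, hu⟩
    have h2 := lmv_mono p r s hu
    have h3 : (J4 p r s).r (elmv (Sum.inr (Sum.inl c) : X3 l m v)) (elmv (outEmb u)) :=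
      (J4 p r s).iseqv.symm h2
    obtain ⟨c0, hc0⟩ := hpu _ h3
    rcases u with jj | tt <;> simp [elmv, outEmb] at hc0
  have hcond' : ¬ ∃ u : Pt l v, (jointSetoid r s).r (outEmb u) (Sum.inr (Sum.inl c')) := by
    rintro ⟨u, hu⟩
    have h2 := lmv_mono p r s hu
    have h3 : (J4 p r s).r (elmv (Sum.inr (Sum.inl c) : X3 l m v)) (elmv (outEmb u)) :=
      (J4 p r s).iseqv.trans h ((J4 p r s).iseqv.symm h2)
    obtain ⟨c0, hc0⟩ := hpu _ h3
    rcases u with jj | tt <;> simp [elmv, outEmb] at hc0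
  have hf := fA_inv p r s h
  simp only [elmv, Sum.elim_inl, Sum.elim_inr] at hf
  rw [fA_m_eq, fA_m_eq, dif_neg hcond, dif_neg hcond'] at hf
  exact Quotient.exact (Sum.inr.inj hf)

private lemma pure2_1 (g : X3 l m v)
    (hpu : ∀ y, (jointSetoid r s).r g y → ∃ c : Fin m, y = Sum.inr (Sum.inl c)) :
    ∀ d, (J4 p r s).r (elmv g) d → ∃ c : Fin m, d = Sum.inr (Sum.inr (Sum.inl c)) := by
  obtain ⟨c, hg⟩ := hpu g ((jointSetoid r s).iseqv.refl g)
  subst hg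
  have hcond : ¬ ∃ u : Pt l v, (jointSetoid r s).r (outEmb u) (Sum.inr (Sum.inl c)) := by
    rintro ⟨u, hu⟩
    obtain ⟨c0, hc0⟩ := hpu (outEmb u) ((jointSetoid r s).iseqv.symm hu)
    rcases u with jj | tt <;> simp [outEmb] at hc0
  have hl : fA p r s (elmv (Sum.inr (Sum.inl c) : X3 l m v)) =
      Sum.inr (Quotient.mk (jointSetoid r s) (Sum.inr (Sum.inl c))) := by
    show fA p r s (Sum.inr (Sum.inr (Sum.inl c))) = _
    rw [fA_m_eq, dif_neg hcond]
  intro d hd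
  have hf := fA_inv p r s hd
  rw [hl] at hf
  rcases d with i | j | c0 | t
  · rw [fA_k] at hf; cases hf
  · rw [fA_l] at hf; cases hf
  · exact ⟨c0, rfl⟩
  · rw [fA_v] at hf; cases hf

private lemma F1 : blocks (jointSetoid p (compPart r s)) + cb r s
    = Nat.card (Quotient (J4 p r s)) := by
  have h3 := card_split' (β := Quotient (J4 p r s))
    (fun cls => ∀ d, Quotient.mk (J4 p r s) d = cls →
      ∃ c : Fin m, d = Sum.inr (Sum.inr (Sum.inl c)))
  have h1 := card_outer (J4 p r s) (jointSetoid p (compPart r s)) eklv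
    (fun d => ∃ c : Fin m, d = Sum.inr (Sum.inr (Sum.inl c))) (range1) (B1_iff p r s)
  have h2 := card_pure (J4 p r s) (jointSetoid r s) elmv
    (fun d => ∃ c : Fin m, d = Sum.inr (Sum.inr (Sum.inl c)))
    (fun g => ∃ c : Fin m, g = Sum.inr (Sum.inl c))
    (fun g g' h => lmv_mono p r s h)
    (by rintro (j | c | t) ⟨c', hc'⟩
        · simp [elmv] at hc'
        · exact ⟨c, rfl⟩
        · simp [elmv] at hc')
    (by rintro d ⟨c, rfl⟩; exact ⟨Sum.inr (Sum.inl c), rfl⟩)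
    (pure1_1 p r s) (pure2_1 p r s)
  unfold blocks cb
  rw [h1, h2, h3]
  exact Nat.add_comm _ _

-- ===== instance 2 : rows k,m,v vs pure middle row l =====

private noncomputable def fB : X4 k l m v →
    Quotient (jointSetoid (compPart p r) s) ⊕ Quotient (jointSetoid p r)
  | Sum.inl i => Sum.inl (Quotient.mk _ (Sum.inl i))
  | Sum.inr (Sum.inr (Sum.inl c)) => Sum.inl (Quotient.mk _ (Sum.inr (Sum.inl c)))
  | Sum.inr (Sum.inr (Sum.inr t)) => Sum.inl (Quotient.mk _ (Sum.inr (Sum.inr t)))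
  | Sum.inr (Sum.inl j) =>
    if h : ∃ u : Pt k m, (jointSetoid p r).r (outEmb u) (Sum.inr (Sum.inl j)) then
      Sum.inl (Quotient.mk _ (upEmb h.choose))
    else Sum.inr (Quotient.mk _ (Sum.inr (Sum.inl j)))

private lemma fB_k (i : Fin k) : fB p r s (Sum.inl i) =
    Sum.inl (Quotient.mk (jointSetoid (compPart p r) s) (Sum.inl i)) := rfl
private lemma fB_m (c : Fin m) : fB p r s (Sum.inr (Sum.inr (Sum.inl c))) =
    Sum.inl (Quotient.mk (jointSetoid (compPart p r) s) (Sum.inr (Sum.inl c))) := rfl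
private lemma fB_v (t : Fin v) : fB p r s (Sum.inr (Sum.inr (Sum.inr t))) =
    Sum.inl (Quotient.mk (jointSetoid (compPart p r) s) (Sum.inr (Sum.inr t))) := rfl
private lemma fB_l_eq (j : Fin l) : fB p r s (Sum.inr (Sum.inl j)) =
    if h : ∃ u : Pt k m, (jointSetoid p r).r (outEmb u) (Sum.inr (Sum.inl j)) then
      Sum.inl (Quotient.mk (jointSetoid (compPart p r) s) (upEmb h.choose))
    else Sum.inr (Quotient.mk (jointSetoid p r) (Sum.inr (Sum.inl j))) := rfl

private lemma prB (u u' : Pt k m)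
    (h : (jointSetoid p r).r (outEmb u) (outEmb u')) :
    (jointSetoid (compPart p r) s).r (upEmb u) (upEmb u') :=
  Relation.EqvGen.rel _ _ (Or.inl ⟨u, u', h, rfl, rfl⟩)

private lemma fB_l (j : Fin l) (u : Pt k m)
    (h : (jointSetoid p r).r (outEmb u) (Sum.inr (Sum.inl j))) :
    fB p r s (Sum.inr (Sum.inl j)) =
      Sum.inl (Quotient.mk (jointSetoid (compPart p r) s) (upEmb u)) := by
  have hex : ∃ u' : Pt k m, (jointSetoid p r).r (outEmb u') (Sum.inr (Sum.inl j)) := ⟨u, h⟩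
  rw [fB_l_eq, dif_pos hex]
  exact congrArg Sum.inl (Quotient.sound (prB p r s _ _
    ((jointSetoid p r).iseqv.trans hex.choose_spec ((jointSetoid p r).iseqv.symm h))))

private lemma fB_ll (j j' : Fin l)
    (h : (jointSetoid p r).r (Sum.inr (Sum.inl j)) (Sum.inr (Sum.inl j'))) :
    fB p r s (Sum.inr (Sum.inl j)) = fB p r s (Sum.inr (Sum.inl j')) := by
  by_cases hex : ∃ u : Pt k m, (jointSetoid p r).r (outEmb u) (Sum.inr (Sum.inl j))
  · obtain ⟨u, hu⟩ := hex
    rw [fB_l p r s j u hu, fB_l p r s j' u ((jointSetoid p r).iseqv.trans hu h)]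
  · have hex' : ¬ ∃ u : Pt k m, (jointSetoid p r).r (outEmb u) (Sum.inr (Sum.inl j')) := by
      rintro ⟨u, hu⟩
      exact hex ⟨u, (jointSetoid p r).iseqv.trans hu ((jointSetoid p r).iseqv.symm h)⟩
    rw [fB_l_eq, fB_l_eq, dif_neg hex, dif_neg hex']
    exact congrArg Sum.inr (Quotient.sound h)

private lemma fB_edge (x y : X4 k l m v) (hxy : rel4 p r s x y) :
    fB p r s x = fB p r s y := by
  rcases hxy with ⟨a, b, hab, rfl, rfl⟩ | ⟨a, b, hab, rfl, rfl⟩ | ⟨a, b, hab, rfl, rfl⟩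
  · have hC : (jointSetoid p r).r (upEmb a) (upEmb b) :=
      Relation.EqvGen.rel _ _ (Or.inl ⟨a, b, hab, rfl, rfl⟩)
    rcases a with i | j <;> rcases b with i' | j'
    · exact congrArg Sum.inl (Quotient.sound (prB p r s (Sum.inl i) (Sum.inl i') hC))
    · exact (fB_l p r s j' (Sum.inl i) hC).symm
    · exact fB_l p r s j (Sum.inl i') ((jointSetoid p r).iseqv.symm hC)
    · exact fB_ll p r s j j' hC
  · have hC : (jointSetoid p r).r (loEmb a) (loEmb b) :=
      Relation.EqvGen.rel _ _ (Or.inr ⟨a, b, hab, rfl, rfl⟩)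
    rcases a with j | c <;> rcases b with j' | c'
    · exact fB_ll p r s j j' hC
    · exact (fB_l p r s j (Sum.inr c') ((jointSetoid p r).iseqv.symm hC)).symm.symm
    · exact (fB_l p r s j' (Sum.inr c) hC).symm
    · exact congrArg Sum.inl (Quotient.sound (prB p r s (Sum.inr c) (Sum.inr c') hC))
  · have hB' : (jointSetoid (compPart p r) s).r (loEmb a) (loEmb b) :=
      Relation.EqvGen.rel _ _ (Or.inr ⟨a, b, hab, rfl, rfl⟩)
    have e : ∀ a : Pt m v, fB p r s (e3 a) =
        Sum.inl (Quotient.mk (jointSetoid (compPart p r) s) (loEmb a)) := by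
      rintro (c | t) <;> rfl
    rw [e a, e b]
    exact congrArg Sum.inl (Quotient.sound hB')

private lemma fB_inv {x y : X4 k l m v} (h : (J4 p r s).r x y) : fB p r s x = fB p r s y := by
  have h' : Relation.EqvGen (rel4 p r s) x y := h
  clear h
  induction h' with
  | rel a b hab => exact fB_edge p r s a b hab
  | refl => rfl
  | symm _ _ _ ih => exact ih.symm
  | trans _ _ _ _ _ ih1 ih2 => exact ih1.trans ih2

private lemma B2_iff (x y : X3 k m v) :
    (jointSetoid (compPart p r) s).r x y ↔ (J4 p r s).r (ekmv x) (ekmv y) := by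
  constructor
  · intro h
    have h' : Relation.EqvGen _ x y := h
    clear h
    induction h' with
    | rel a b hab =>
      rcases hab with ⟨a, b, hab, rfl, rfl⟩ | ⟨a, b, hab, rfl, rfl⟩
      · have h2 : (jointSetoid p r).r (outEmb a) (outEmb b) := hab
        have h3 := klm_mono p r s h2
        have ea : eklm (outEmb a) = (ekmv (upEmb a) : X4 k l m v) := by cases a <;> rfl
        have eb : eklm (outEmb b) = (ekmv (upEmb b) : X4 k l m v) := by cases b <;> rfl
        rw [ea, eb] at h3
        exact h3
      · exact Relation.EqvGen.rel _ _
          (Or.inr (Or.inr ⟨a, b, hab, by cases a <;> rfl, by cases b <;> rfl⟩))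
    | refl a => exact Relation.EqvGen.refl _
    | symm _ _ _ ih => exact Relation.EqvGen.symm _ _ ih
    | trans _ _ _ _ _ ih1 ih2 => exact Relation.EqvGen.trans _ _ _ ih1 ih2
  · intro h
    have hf := fB_inv p r s h
    have e : ∀ z : X3 k m v, fB p r s (ekmv z) =
        Sum.inl (Quotient.mk (jointSetoid (compPart p r) s) z) := by
      rintro (i | c | t) <;> rfl
    rw [e x, e y] at hf
    exact Quotient.exact (Sum.inl.inj hf)

private lemma range2 (d : X4 k l m v) :
    ¬ (∃ j : Fin l, d = Sum.inr (Sum.inl j)) ↔ ∃ x : X3 k m v, ekmv x = d := by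
  rcases d with i | j | c | t
  · exact ⟨fun _ => ⟨Sum.inl i, rfl⟩, fun _ => by rintro ⟨j, hj⟩; simp at hj⟩
  · constructor
    · intro h; exact absurd ⟨j, rfl⟩ h
    · rintro ⟨(i' | c' | t'), hx⟩ <;> simp [ekmv] at hx
  · exact ⟨fun _ => ⟨Sum.inr (Sum.inl c), rfl⟩, fun _ => by rintro ⟨j, hj⟩; simp at hj⟩
  · exact ⟨fun _ => ⟨Sum.inr (Sum.inr t), rfl⟩, fun _ => by rintro ⟨j, hj⟩; simp at hj⟩

private lemma pure1_2 (g g' : X3 k l m)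
    (hpu : ∀ d, (J4 p r s).r (eklm g) d → ∃ j : Fin l, d = Sum.inr (Sum.inl j))
    (h : (J4 p r s).r (eklm g) (eklm g')) : (jointSetoid p r).r g g' := by
  obtain ⟨j, hc⟩ := hpu (eklm g) ((J4 p r s).iseqv.refl _)
  obtain ⟨j', hc'⟩ := hpu (eklm g') h
  have hg : g = Sum.inr (Sum.inl j) := by
    rcases g with i | j0 | c
    · simp [eklm] at hc
    · simp only [eklm, Sum.elim_inl, Sum.elim_inr] at hc
      simp only [Sum.inr.injEq, Sum.inl.injEq] at hc
      rw [hc]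
    · simp [eklm] at hc
  have hg' : g' = Sum.inr (Sum.inl j') := by
    rcases g' with i | j0 | c
    · simp [eklm] at hc'
    · simp only [eklm, Sum.elim_inl, Sum.elim_inr] at hc'
      simp only [Sum.inr.injEq, Sum.inl.injEq] at hc'
      rw [hc']
    · simp [eklm] at hc'
  subst hg; subst hg'
  have hcond : ¬ ∃ u : Pt k m, (jointSetoid p r).r (outEmb u) (Sum.inr (Sum.inl j)) := by
    rintro ⟨u, hu⟩
    have h2 := klm_mono p r s hu
    have h3 : (J4 p r s).r (eklm (Sum.inr (Sum.inl j) : X3 k l m)) (eklm (outEmb u)) :=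
      (J4 p r s).iseqv.symm h2
    obtain ⟨j0, hc0⟩ := hpu _ h3
    rcases u with ii | cc <;> simp [eklm, outEmb] at hc0
  have hcond' : ¬ ∃ u : Pt k m, (jointSetoid p r).r (outEmb u) (Sum.inr (Sum.inl j')) := by
    rintro ⟨u, hu⟩
    have h2 := klm_mono p r s hu
    have h3 : (J4 p r s).r (eklm (Sum.inr (Sum.inl j) : X3 k l m)) (eklm (outEmb u)) :=
      (J4 p r s).iseqv.trans h ((J4 p r s).iseqv.symm h2)
    obtain ⟨j0, hc0⟩ := hpu _ h3
    rcases u with ii | cc <;> simp [eklm, outEmb] at hc0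
  have hf := fB_inv p r s h
  simp only [eklm, Sum.elim_inl, Sum.elim_inr] at hf
  rw [fB_l_eq, fB_l_eq, dif_neg hcond, dif_neg hcond'] at hf
  exact Quotient.exact (Sum.inr.inj hf)

private lemma pure2_2 (g : X3 k l m)
    (hpu : ∀ y, (jointSetoid p r).r g y → ∃ j : Fin l, y = Sum.inr (Sum.inl j)) :
    ∀ d, (J4 p r s).r (eklm g) d → ∃ j : Fin l, d = Sum.inr (Sum.inl j) := by
  obtain ⟨j, hg⟩ := hpu g ((jointSetoid p r).iseqv.refl g)
  subst hg
  have hcond : ¬ ∃ u : Pt k m, (jointSetoid p r).r (outEmb u) (Sum.inr (Sum.inl j)) := by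
    rintro ⟨u, hu⟩
    obtain ⟨j0, hc0⟩ := hpu (outEmb u) ((jointSetoid p r).iseqv.symm hu)
    rcases u with ii | cc <;> simp [outEmb] at hc0
  have hl : fB p r s (eklm (Sum.inr (Sum.inl j) : X3 k l m)) =
      Sum.inr (Quotient.mk (jointSetoid p r) (Sum.inr (Sum.inl j))) := by
    show fB p r s (Sum.inr (Sum.inl j)) = _
    rw [fB_l_eq, dif_neg hcond]
  intro d hd
  have hf := fB_inv p r s hd
  rw [hl] at hf
  rcases d with i | j0 | c | t
  · rw [fB_k] at hf; cases hf
  · exact ⟨j0, rfl⟩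
  · rw [fB_m] at hf; cases hf
  · rw [fB_v] at hf; cases hf

private lemma F2 : blocks (jointSetoid (compPart p r) s) + cb p r
    = Nat.card (Quotient (J4 p r s)) := by
  have h3 := card_split' (β := Quotient (J4 p r s))
    (fun cls => ∀ d, Quotient.mk (J4 p r s) d = cls → ∃ j : Fin l, d = Sum.inr (Sum.inl j))
  have h1 := card_outer (J4 p r s) (jointSetoid (compPart p r) s) ekmv
    (fun d => ∃ j : Fin l, d = Sum.inr (Sum.inl j)) (range2) (B2_iff p r s)
  have h2 := card_pure (J4 p r s) (jointSetoid p r) eklm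
    (fun d => ∃ j : Fin l, d = Sum.inr (Sum.inl j))
    (fun g => ∃ j : Fin l, g = Sum.inr (Sum.inl j))
    (fun g g' h => klm_mono p r s h)
    (by rintro (i | j | c) ⟨j', hj'⟩
        · simp [eklm] at hj'
        · exact ⟨j, rfl⟩
        · simp [eklm] at hj')
    (by rintro d ⟨j, rfl⟩; exact ⟨Sum.inr (Sum.inl j), rfl⟩)
    (pure1_2 p r s) (pure2_2 p r s)
  unfold blocks cb
  rw [h1, h2, h3]
  exact Nat.add_comm _ _

/-- For noncrossing partitions `p ∈ NC(k,l)`, `r ∈ NC(l,m)`, `s ∈ NC(m,v)`,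
`cy(p, s∘r) = cy(p,r) + cy(r∘p, s) - cy(r,s)`. -/
theorem cy_comp_eq {k l m v : ℕ} (p : Setoid (Pt k l)) (r : Setoid (Pt l m))
    (s : Setoid (Pt m v)) (hp : Noncrossing p) (hr : Noncrossing r) (hs : Noncrossing s) :
    cy p (compPart r s) = cy p r + cy (compPart p r) s - cy r s := by
  have ha1 := blocks_joint p (compPart r s)
  have ha2 := blocks_joint p r
  have ha3 := blocks_joint (compPart p r) s
  have ha4 := blocks_joint r s
  have hf1 := F1 p r s
  have hf2 := F2 p r s
  unfold cy
  omega
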